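/- There exists a constant C < ∞ such that for every Schwartz function φ : ℝ → ℂ and every k > 0: | lim_{ε→0⁺} ∫_ℝ φ(ρ)/(ρ² − 2k − iε) dρ | ≤ C k^{−1/2} ‖φ̂‖_{L¹(ℝ)} and | ∫_ℝ φ(ρ)/(ρ² + 2k) dρ | ≤ C k^{−1/2} ‖φ̂‖_{L¹(ℝ)}, where φ̂ denotes the Fourier transform of φ, φ̂(x) := (2π)^{−1/2} ∫_ℝ e^{ixρ} φ(ρ) dρ. -/

import Mathlib

open MeasureTheory Filter Real Set Complex

noncomputable section

lemma integrableOn_cexp_Ioi {a : ℂ} (ha : 0 < a.re) :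
    IntegrableOn (fun x : ℝ => Complex.exp (-(a * x))) (Set.Ioi 0) := by
  apply Integrable.mono' (exp_neg_integrableOn_Ioi 0 ha)
  · exact (Complex.continuous_exp.comp (by continuity)).aestronglyMeasurable.restrict
  · filter_upwards with x
    simp [Complex.norm_exp, Complex.mul_re]

lemma integral_cexp_neg_mul_Ioi {a : ℂ} (ha : 0 < a.re) :
    ∫ x : ℝ in Set.Ioi 0, Complex.exp (-(a * x)) = 1 / a := by
  have ha' : a ≠ 0 := fun h => by simp [h] at ha
  have hderiv : ∀ x ∈ Set.Ici (0:ℝ),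
      HasDerivAt (fun x : ℝ => -Complex.exp (-(a * x)) / a) (Complex.exp (-(a * x))) x := by
    intro x _
    have h1 : HasDerivAt (fun y : ℝ => (y : ℂ)) 1 x := Complex.ofRealCLM.hasDerivAt
    have h2 := ((h1.const_mul a).neg.cexp.div_const a).neg
    have e : (fun x : ℝ => -Complex.exp (-(a * x)) / a)
        = (-fun x => Complex.exp ((-fun y : ℝ => a * (y:ℂ)) x) / a) := by
      funext y; simp [neg_div]
    rw [e]; refine h2.congr_deriv ?_
    show -(Complex.exp (-(a * x)) * -(a * 1) / a) = Complex.exp (-(a * x))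
    field_simp
  have htend : Tendsto (fun x : ℝ => -Complex.exp (-(a * x)) / a) atTop (nhds 0) := by
    rw [tendsto_zero_iff_norm_tendsto_zero]
    have h3 : Tendsto (fun x : ℝ => Real.exp (-(a.re * x)) / ‖a‖) atTop (nhds 0) := by
      have := (Real.tendsto_exp_atBot.comp
        (tendsto_neg_atTop_atBot.comp (tendsto_id.const_mul_atTop ha))).div_const ‖a‖
      simpa using this
    apply h3.congr
    intro x
    simp [Complex.norm_exp, Complex.mul_re, norm_div]
  have := integral_Ioi_of_hasDerivAt_of_tendsto' hderiv (integrableOn_cexp_Ioi ha) htend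
  rw [this]
  simp
  field_simp

lemma re_sub_I_mul (c : ℂ) (ρ : ℝ) : (c - Complex.I * ρ).re = c.re := by simp
lemma re_add_I_mul (c : ℂ) (ρ : ℝ) : (c + Complex.I * ρ).re = c.re := by simp

lemma integrableOn_kernel_Ioi {c : ℂ} (hc : 0 < c.re) (ρ : ℝ) :
    IntegrableOn (fun x : ℝ => Complex.exp (Complex.I * x * ρ - c * |x|)) (Set.Ioi 0) := by
  apply (integrableOn_cexp_Ioi (a := c - Complex.I * ρ) (by simpa using hc)).congr_fun
    (fun x hx => ?_) measurableSet_Ioi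
  rw [abs_of_pos (by exact hx)]
  congr 1
  push_cast
  ring

lemma kernel_neg_eq {c : ℂ} (ρ : ℝ) (x : ℝ) (hx : x ∈ Set.Ioi (0:ℝ)) :
    Complex.exp (-((c + Complex.I * ρ) * x)) = Complex.exp (Complex.I * ((-x : ℝ) : ℂ) * ρ - c * |(-x : ℝ)|) := by
  rw [abs_neg, abs_of_pos (by exact hx)]
  congr 1
  push_cast
  ring

lemma integrableOn_kernel_Iic {c : ℂ} (hc : 0 < c.re) (ρ : ℝ) :
    IntegrableOn (fun x : ℝ => Complex.exp (Complex.I * x * ρ - c * |x|)) (Set.Iic 0) := by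
  rw [← Measure.map_neg_eq_self (volume : Measure ℝ)]
  have m : MeasurableEmbedding (fun x : ℝ => -x) := (Homeomorph.neg ℝ).measurableEmbedding
  rw [m.integrableOn_map_iff]
  simp_rw [Function.comp_def, neg_preimage, neg_Iic, neg_zero]
  rw [integrableOn_Ici_iff_integrableOn_Ioi]
  apply (integrableOn_cexp_Ioi (a := c + Complex.I * ρ) (by simpa using hc)).congr_fun
    (fun x hx => kernel_neg_eq ρ x hx) measurableSet_Ioi

lemma integrable_kernel {c : ℂ} (hc : 0 < c.re) (ρ : ℝ) :
    Integrable (fun x : ℝ => Complex.exp (Complex.I * x * ρ - c * |x|)) := by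
  have := (integrableOn_kernel_Iic hc ρ).union (integrableOn_kernel_Ioi hc ρ)
  rwa [Iic_union_Ioi, integrableOn_univ] at this

lemma integral_kernel {c : ℂ} (hc : 0 < c.re) (ρ : ℝ) :
    ∫ x : ℝ, Complex.exp (Complex.I * x * ρ - c * |x|) = 2 * c / (c ^ 2 + (ρ:ℂ) ^ 2) := by
  have h1 : c - Complex.I * ρ ≠ 0 := fun h => by
    have := congrArg Complex.re h; simp at this; linarith
  have h2 : c + Complex.I * ρ ≠ 0 := fun h => by
    have := congrArg Complex.re h; simp at this; linarith
  have hIoi : ∫ x : ℝ in Set.Ioi 0, Complex.exp (Complex.I * x * ρ - c * |x|)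
      = 1 / (c - Complex.I * ρ) := by
    rw [setIntegral_congr_fun measurableSet_Ioi (g := fun x : ℝ =>
      Complex.exp (-((c - Complex.I * ρ) * x))) (fun x hx => ?_)]
    · exact integral_cexp_neg_mul_Ioi (by simpa using hc)
    · rw [abs_of_pos (by exact hx)]; congr 1; push_cast; ring
  have hIic : ∫ x : ℝ in Set.Iic 0, Complex.exp (Complex.I * x * ρ - c * |x|)
      = 1 / (c + Complex.I * ρ) := by
    have := integral_comp_neg_Iic (0:ℝ)
      (fun y : ℝ => Complex.exp (Complex.I * ((-y : ℝ) : ℂ) * ρ - c * |(-y : ℝ)|))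
    simp only [neg_neg, neg_zero] at this
    rw [this]
    rw [setIntegral_congr_fun measurableSet_Ioi (g := fun x : ℝ =>
      Complex.exp (-((c + Complex.I * ρ) * x))) (fun x hx => (kernel_neg_eq ρ x hx).symm)]
    exact integral_cexp_neg_mul_Ioi (by simpa using hc)
  have hprod : (c - Complex.I * ρ) * (c + Complex.I * ρ) = c ^ 2 + (ρ:ℂ) ^ 2 := by
    have := Complex.I_sq
    ring_nf
    rw [Complex.I_sq]
    ring
  rw [← intervalIntegral.integral_Iic_add_Ioi (integrableOn_kernel_Iic hc ρ) (integrableOn_kernel_Ioi hc ρ),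
    hIic, hIoi, div_add_div _ _ h2 h1, ← hprod]
  rw [mul_comm (c - Complex.I * ρ)]
  congr 1
  ring

lemma integrable_exp_neg_abs {b : ℝ} (hb : 0 < b) :
    Integrable (fun x : ℝ => Real.exp (-b * |x|)) := by
  have hIoi : IntegrableOn (fun x : ℝ => Real.exp (-b * |x|)) (Set.Ioi 0) :=
    (exp_neg_integrableOn_Ioi 0 hb).congr_fun
      (fun x hx => by rw [abs_of_pos (by exact hx)]) measurableSet_Ioi
  have hIic : IntegrableOn (fun x : ℝ => Real.exp (-b * |x|)) (Set.Iic 0) := by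
    rw [← Measure.map_neg_eq_self (volume : Measure ℝ)]
    have m : MeasurableEmbedding (fun x : ℝ => -x) := (Homeomorph.neg ℝ).measurableEmbedding
    rw [m.integrableOn_map_iff]
    simp_rw [Function.comp_def, abs_neg, neg_preimage, neg_Iic, neg_zero]
    exact Iff.mpr integrableOn_Ici_iff_integrableOn_Ioi hIoi
  have := hIic.union hIoi
  rwa [Iic_union_Ioi, integrableOn_univ] at this

lemma main_identity (φ : SchwartzMap ℝ ℂ) {c : ℂ} (hc : 0 < c.re) :
    ∫ x : ℝ, (∫ ρ : ℝ, Complex.exp (Complex.I * x * ρ) * φ ρ) * Complex.exp (-(c * |x|)) =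
      (2 * c) * ∫ ρ : ℝ, φ ρ / ((ρ:ℂ) ^ 2 + c ^ 2) := by
  have hint : Integrable (Function.uncurry fun x ρ : ℝ =>
      Complex.exp (Complex.I * x * ρ) * φ ρ * Complex.exp (-(c * |x|)))
      (volume.prod volume) := by
    apply Integrable.mono' ((integrable_exp_neg_abs hc).mul_prod (φ.integrable.norm))
    · apply Continuous.aestronglyMeasurable
      apply Continuous.mul
      · exact (Complex.continuous_exp.comp (by fun_prop)).mul (φ.continuous.comp continuous_snd)
      · exact Complex.continuous_exp.comp (by fun_prop)
    · filter_upwards with z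
      simp only [Function.uncurry, norm_mul, Complex.norm_exp]
      have h1 : (Complex.I * z.1 * z.2).re = 0 := by simp
      have h2 : (-(c * (|z.1| : ℝ))).re = -c.re * |z.1| := by
        simp [Complex.mul_re]
      rw [h1, h2, Real.exp_zero, one_mul]
      rw [mul_comm (‖φ z.2‖)]
  have swap := MeasureTheory.integral_integral_swap hint
  have hstep : ∀ x : ℝ, (∫ ρ : ℝ, Complex.exp (Complex.I * x * ρ) * φ ρ) * Complex.exp (-(c * |x|))
      = ∫ ρ : ℝ, Complex.exp (Complex.I * x * ρ) * φ ρ * Complex.exp (-(c * |x|)) := by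
    intro x
    rw [MeasureTheory.integral_mul_const]
  calc ∫ x : ℝ, (∫ ρ : ℝ, Complex.exp (Complex.I * x * ρ) * φ ρ) * Complex.exp (-(c * |x|))
      = ∫ x : ℝ, ∫ ρ : ℝ, Complex.exp (Complex.I * x * ρ) * φ ρ * Complex.exp (-(c * |x|)) := by
        simp_rw [hstep]
    _ = ∫ ρ : ℝ, ∫ x : ℝ, Complex.exp (Complex.I * x * ρ) * φ ρ * Complex.exp (-(c * |x|)) := swap
    _ = ∫ ρ : ℝ, (2 * c) * (φ ρ / ((ρ:ℂ) ^ 2 + c ^ 2)) := by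
        apply MeasureTheory.integral_congr_ae
        filter_upwards with ρ
        have he : ∀ x : ℝ, Complex.exp (Complex.I * x * ρ) * φ ρ * Complex.exp (-(c * |x|))
            = φ ρ * Complex.exp (Complex.I * x * ρ - c * |x|) := by
          intro x
          rw [mul_comm _ (φ ρ), mul_assoc, ← Complex.exp_add]
          ring_nf
        simp_rw [he]
        rw [MeasureTheory.integral_const_mul, integral_kernel hc ρ]
        have hne : c ^ 2 + (ρ:ℂ) ^ 2 ≠ 0 := by
          intro h
          have hprod : (c - Complex.I * ρ) * (c + Complex.I * ρ) = c ^ 2 + (ρ:ℂ) ^ 2 := by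
            ring_nf; rw [Complex.I_sq]; ring
          rw [h] at hprod
          rcases mul_eq_zero.mp hprod with h' | h'
          · exact (fun hh => by have := congrArg Complex.re hh; simp at this; linarith) h'
          · exact (fun hh => by have := congrArg Complex.re hh; simp at this; linarith) h'
        have hne' : (ρ:ℂ) ^ 2 + c ^ 2 ≠ 0 := by rw [add_comm]; exact hne
        field_simp
        ring
    _ = (2 * c) * ∫ ρ : ℝ, φ ρ / ((ρ:ℂ) ^ 2 + c ^ 2) := MeasureTheory.integral_const_mul _ _

/-- The Fourier transform `φ̂(x) = (2π)^{-1/2} ∫ e^{ixρ} φ(ρ) dρ` of a function on ℝ. -/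
noncomputable def hat1 (φ : ℝ → ℂ) (x : ℝ) : ℂ :=
  (((2 * π) ^ (-(1:ℝ)/2) : ℝ) : ℂ) * ∫ ρ : ℝ, Complex.exp (Complex.I * x * ρ) * φ ρ

lemma hat1_eq (φ : SchwartzMap ℝ ℂ) :
    hat1 ⇑φ = fun x : ℝ =>
      (((2 * π) ^ (-(1:ℝ)/2) : ℝ) : ℂ) * FourierTransform.fourier (⇑φ : ℝ → ℂ) (-x / (2 * π)) := by
  funext x
  unfold hat1
  congr 1
  rw [Real.fourier_real_eq_integral_exp_smul]
  apply MeasureTheory.integral_congr_ae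
  filter_upwards with v
  rw [smul_eq_mul]
  congr 1
  have h : -2 * π * v * (-x / (2 * π)) = v * x := by
    field_simp
  rw [h]
  push_cast
  ring

lemma integrable_hat1 (φ : SchwartzMap ℝ ℂ) : Integrable (hat1 ⇑φ) := by
  rw [hat1_eq]
  have h1 : Integrable (FourierTransform.fourier (⇑φ : ℝ → ℂ)) := by
    have := (SchwartzMap.fourierTransformCLM ℂ φ).integrable (μ := volume)
    rwa [SchwartzMap.fourierTransformCLM_apply, SchwartzMap.fourier_coe] at this
  have h2 := h1.comp_mul_left' (R := -(2*π)⁻¹) (by simp [Real.pi_ne_zero])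
  apply (h2.const_mul ((((2 * π) ^ (-(1:ℝ)/2) : ℝ)) : ℂ)).congr
  filter_upwards with x
  congr 2
  ring

lemma main_identity' (φ : SchwartzMap ℝ ℂ) {c : ℂ} (hc : 0 < c.re) :
    ∫ ρ : ℝ, φ ρ / ((ρ:ℂ) ^ 2 + c ^ 2)
      = (((2 * π) ^ ((1:ℝ)/2) : ℝ) : ℂ) / (2 * c) *
        ∫ x : ℝ, hat1 ⇑φ x * Complex.exp (-(c * |x|)) := by
  have hc0 : c ≠ 0 := fun h => by rw [h] at hc; simp at hc
  have hBA : (((2 * π) ^ ((1:ℝ)/2) : ℝ) : ℂ) * (((2 * π) ^ (-(1:ℝ)/2) : ℝ) : ℂ) = 1 := by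
    rw [← Complex.ofReal_mul, ← Real.rpow_add (by positivity)]
    norm_num
  have h1 : ∫ x : ℝ, hat1 ⇑φ x * Complex.exp (-(c * |x|))
      = (((2 * π) ^ (-(1:ℝ)/2) : ℝ) : ℂ) * ((2 * c) * ∫ ρ : ℝ, φ ρ / ((ρ:ℂ)^2 + c^2)) := by
    rw [← main_identity φ hc]
    simp only [hat1]
    simp_rw [mul_assoc]
    rw [MeasureTheory.integral_const_mul]
  have h2c : (2 * c) ≠ 0 := mul_ne_zero two_ne_zero hc0
  rw [h1]
  rw [show (((2 * π) ^ ((1:ℝ)/2) : ℝ) : ℂ) / (2 * c) * ((((2 * π) ^ (-(1:ℝ)/2) : ℝ) : ℂ) *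
      ((2 * c) * ∫ ρ : ℝ, φ ρ / ((ρ:ℂ)^2 + c^2)))
      = ((((2 * π) ^ ((1:ℝ)/2) : ℝ) : ℂ) * (((2 * π) ^ (-(1:ℝ)/2) : ℝ) : ℂ))
        * (∫ ρ : ℝ, φ ρ / ((ρ:ℂ)^2 + c^2)) * ((2 * c) / (2 * c)) by ring,
    hBA, div_self h2c, one_mul, mul_one]

lemma J_bound (φ : SchwartzMap ℝ ℂ) {c : ℂ} (hc : 0 ≤ c.re) :
    ‖∫ x : ℝ, hat1 ⇑φ x * Complex.exp (-(c * |x|))‖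
      ≤ ∫ x : ℝ, ‖hat1 ⇑φ x‖ := by
  refine (norm_integral_le_integral_norm _).trans ?_
  refine integral_mono_of_nonneg (Eventually.of_forall fun x => norm_nonneg _)
    ((integrable_hat1 φ).norm) (Eventually.of_forall fun x => ?_)
  show ‖hat1 ⇑φ x * Complex.exp (-(c * (|x| : ℝ)))‖ ≤ ‖hat1 ⇑φ x‖
  rw [norm_mul]
  have hre : (-(c * (|x| : ℝ))).re = -(c.re * |x|) := by simp [Complex.mul_re]
  have : ‖Complex.exp (-(c * (|x| : ℝ)))‖ ≤ 1 := by
    rw [Complex.norm_exp, hre, ← Real.exp_zero]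
    apply Real.exp_le_exp.mpr
    simp only [neg_nonpos, Real.exp_zero]
    positivity
  calc ‖hat1 ⇑φ x‖ * ‖Complex.exp (-(c * (|x| : ℝ)))‖ ≤ ‖hat1 ⇑φ x‖ * 1 := by
        gcongr
    _ = ‖hat1 ⇑φ x‖ := mul_one _

lemma exp_abs_le_one {c : ℂ} (hc : 0 ≤ c.re) (x : ℝ) :
    ‖Complex.exp (-(c * (|x| : ℝ)))‖ ≤ 1 := by
  have hre : (-(c * (|x| : ℝ))).re = -(c.re * |x|) := by simp [Complex.mul_re]
  rw [Complex.norm_exp, hre, ← Real.exp_zero]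
  apply Real.exp_le_exp.mpr
  simp only [neg_nonpos, Real.exp_zero]
  positivity

lemma abs_integral_bound (φ : SchwartzMap ℝ ℂ) {c : ℂ} (hc : 0 < c.re) :
    ‖∫ ρ : ℝ, φ ρ / ((ρ:ℂ) ^ 2 + c ^ 2)‖
      ≤ (2 * π) ^ ((1:ℝ)/2) / (2 * ‖c‖) * ∫ x : ℝ, ‖hat1 ⇑φ x‖ := by
  rw [main_identity' φ hc, norm_mul, norm_div, norm_mul, Complex.norm_two, Complex.norm_real, Real.norm_eq_abs,
    _root_.abs_of_nonneg (by positivity : (0:ℝ) ≤ (2*π) ^ ((1:ℝ)/2))]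
  gcongr
  exact J_bound φ hc.le

lemma im_cpow_half_pos {z : ℂ} (hre : 0 < z.re) (him : 0 < z.im) :
    0 < (z ^ (1/2 : ℂ)).im := by
  have hz : z ≠ 0 := fun h => by rw [h] at hre; simp at hre
  rw [Complex.cpow_def_of_ne_zero hz, Complex.exp_im]
  apply mul_pos (Real.exp_pos _)
  have him' : (Complex.log z * (1/2 : ℂ)).im = z.arg * (1/2) := by
    simp [Complex.mul_im, Complex.log_im]
  rw [him']
  apply Real.sin_pos_of_pos_of_lt_pi
  · have harg : 0 < z.arg := by
      rcases lt_or_eq_of_le (Complex.arg_nonneg_iff.mpr him.le) with h | h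
      · exact h
      · exfalso
        have := Complex.arg_eq_zero_iff.mp h.symm
        exact him.ne' this.2
    positivity
  · have h1 := Complex.arg_le_pi z
    nlinarith [Real.pi_pos]

lemma cpow_half_sq {z : ℂ} (hz : z ≠ 0) : (z ^ (1/2 : ℂ)) * (z ^ (1/2 : ℂ)) = z := by
  rw [← Complex.cpow_add _ _ hz]
  norm_num

theorem stmt12 :
    ∃ C : ℝ, ∀ (φ : SchwartzMap ℝ ℂ) (k : ℝ), 0 < k →
      (∃ L : ℂ,
        Tendsto (fun ε : ℝ => ∫ ρ : ℝ, φ ρ / (((ρ^2 - 2*k : ℝ) : ℂ) - Complex.I * ε))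
          (nhdsWithin 0 (Set.Ioi 0)) (nhds L) ∧
        ‖L‖ ≤ C * k ^ (-(1:ℝ)/2) * ∫ x : ℝ, ‖hat1 (⇑φ) x‖)
      ∧ ‖∫ ρ : ℝ, φ ρ / (((ρ^2 + 2*k : ℝ) : ℂ))‖
          ≤ C * k ^ (-(1:ℝ)/2) * ∫ x : ℝ, ‖hat1 (⇑φ) x‖ := by
  refine ⟨Real.sqrt π, fun φ k hk => ?_⟩
  set M : ℝ := ∫ x : ℝ, ‖hat1 (⇑φ) x‖ with hMdef
  have hM : 0 ≤ M := integral_nonneg fun x => norm_nonneg _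
  have h2k : (0:ℝ) < 2 * k := by linarith
  have hsq : (0:ℝ) < Real.sqrt (2*k) := Real.sqrt_pos.mpr h2k
  have hnum : (2*π) ^ ((1:ℝ)/2) / (2 * Real.sqrt (2*k)) ≤ Real.sqrt π * k ^ (-(1:ℝ)/2) := by
    have hk1 : k ^ (-(1:ℝ)/2) = (Real.sqrt k)⁻¹ := by
      rw [show (-(1:ℝ)/2) = -(1/2) by norm_num, Real.rpow_neg hk.le, ← Real.sqrt_eq_rpow]
    have h2 : (2*π) ^ ((1:ℝ)/2) = Real.sqrt 2 * Real.sqrt π := by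
      rw [← Real.sqrt_eq_rpow, Real.sqrt_mul (by norm_num)]
    rw [hk1, h2, Real.sqrt_mul (by norm_num) k]
    have hkk : (0:ℝ) < Real.sqrt k := Real.sqrt_pos.mpr hk
    have heq : Real.sqrt 2 * Real.sqrt π / (2 * (Real.sqrt 2 * Real.sqrt k))
        = Real.sqrt π / (2 * Real.sqrt k) := by
      field_simp
    rw [heq, ← div_eq_mul_inv]
    gcongr
    linarith
  constructor
  · -- the limiting absorption part
    set c0 : ℂ := -Complex.I * ((Real.sqrt (2*k) : ℝ) : ℂ) with hc0def
    have hc0abs : ‖c0‖ = Real.sqrt (2*k) := by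
      rw [hc0def, norm_mul, norm_neg, Complex.norm_I, one_mul, Complex.norm_real, Real.norm_eq_abs,
        _root_.abs_of_nonneg hsq.le]
    have hc0ne : c0 ≠ 0 := by
      intro h; rw [h, norm_zero] at hc0abs; exact hsq.ne hc0abs
    have hc0re : c0.re = 0 := by simp [hc0def]
    set c1 : ℝ → ℂ := fun ε => -Complex.I * ((((2*k : ℝ) : ℂ) + Complex.I * ε) ^ (1/2 : ℂ))
      with hc1def
    have hzre : ∀ ε : ℝ, ((((2*k : ℝ) : ℂ) + Complex.I * ε)).re = 2*k := by intro ε; simp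
    have hzim : ∀ ε : ℝ, ((((2*k : ℝ) : ℂ) + Complex.I * ε)).im = ε := by intro ε; simp
    have hzne : ∀ ε : ℝ, (((2*k : ℝ) : ℂ) + Complex.I * ε) ≠ 0 := by
      intro ε h
      have := congrArg Complex.re h
      rw [hzre] at this; simp at this; linarith
    have hc1re : ∀ ε : ℝ, ε ∈ Set.Ioi (0:ℝ) → 0 < (c1 ε).re := by
      intro ε hε
      have h1 : (c1 ε).re = ((((2*k : ℝ) : ℂ) + Complex.I * ε) ^ (1/2 : ℂ)).im := by
        simp [hc1def]
      rw [h1]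
      exact im_cpow_half_pos (by rw [hzre]; linarith) (by rw [hzim]; exact hε)
    have hc1sq : ∀ ε : ℝ, (c1 ε) ^ 2 = -((((2*k : ℝ) : ℂ) + Complex.I * ε)) := by
      intro ε
      have hw := cpow_half_sq (hzne ε)
      calc (c1 ε) ^ 2 = Complex.I ^ 2 * (((((2*k : ℝ) : ℂ) + Complex.I * ε)) ^ (1/2:ℂ) *
            ((((2*k : ℝ) : ℂ) + Complex.I * ε)) ^ (1/2:ℂ)) := by rw [hc1def]; ring
        _ = -((((2*k : ℝ) : ℂ) + Complex.I * ε)) := by rw [Complex.I_sq, hw]; ring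
    have hc1tend : Tendsto c1 (nhdsWithin 0 (Set.Ioi 0)) (nhds c0) := by
      have hcont : ContinuousAt (fun ε : ℝ => (((2*k : ℝ) : ℂ) + Complex.I * ε)) 0 := by
        fun_prop
      have hmem : (((2*k : ℝ) : ℂ)) ∈ Complex.slitPlane := by
        apply Complex.mem_slitPlane_iff.mpr
        left; simp; linarith
      have hcpow : ContinuousAt (fun w : ℂ => w ^ (1/2 : ℂ)) (((2*k : ℝ) : ℂ)) :=
        continuousAt_cpow_const hmem
      have hcomp : ContinuousAt c1 0 := by
        rw [hc1def]
        apply ContinuousAt.mul continuousAt_const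
        have h0 : (fun ε : ℝ => (((2*k : ℝ) : ℂ) + Complex.I * ε)) 0 = ((2*k : ℝ) : ℂ) := by
          simp
        have hcc : ContinuousAt ((fun w : ℂ => w ^ (1/2:ℂ)) ∘
            (fun ε : ℝ => (((2*k:ℝ):ℂ) + Complex.I * ε))) 0 :=
          ContinuousAt.comp (by simp only [Complex.ofReal_zero, mul_zero, add_zero]; exact hcpow) hcont
        exact hcc
      have hval : c1 0 = c0 := by
        have h1 : (((2*k : ℝ) : ℂ) + Complex.I * (0:ℝ)) = ((2*k : ℝ) : ℂ) := by simp
        rw [hc1def, hc0def]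
        simp only [Complex.ofReal_zero, mul_zero, add_zero]
        congr 1
        rw [show Real.sqrt (2*k) = (2*k) ^ ((1:ℝ)/2) from Real.sqrt_eq_rpow _,
          Complex.ofReal_cpow h2k.le]
        norm_num
      have := hcomp.tendsto
      rw [hval] at this
      exact this.mono_left nhdsWithin_le_nhds
    set B : ℂ := (((2 * π) ^ ((1:ℝ)/2) : ℝ) : ℂ) with hBdef
    set J : ℂ → ℂ := fun c => ∫ x : ℝ, hat1 (⇑φ) x * Complex.exp (-(c * |x|)) with hJdef
    refine ⟨B / (2 * c0) * J c0, ?_, ?_⟩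
    · -- convergence
      have hJt : Tendsto (fun ε : ℝ => J (c1 ε)) (nhdsWithin 0 (Set.Ioi 0)) (nhds (J c0)) := by
        apply tendsto_integral_filter_of_dominated_convergence
          (bound := fun x : ℝ => ‖hat1 (⇑φ) x‖)
        · filter_upwards with ε
          apply AEStronglyMeasurable.mul (integrable_hat1 φ).aestronglyMeasurable
          exact (Complex.continuous_exp.comp (by fun_prop)).aestronglyMeasurable
        · filter_upwards [self_mem_nhdsWithin] with ε hε
          filter_upwards with x
          calc ‖hat1 (⇑φ) x * Complex.exp (-(c1 ε * |x|))‖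
              = ‖hat1 (⇑φ) x‖ * ‖Complex.exp (-(c1 ε * (|x| : ℝ)))‖ := norm_mul _ _
            _ ≤ ‖hat1 (⇑φ) x‖ * 1 := by gcongr; exact exp_abs_le_one (hc1re ε hε).le x
            _ = ‖hat1 (⇑φ) x‖ := mul_one _
        · have := (integrable_hat1 φ).norm
          apply this.congr
          filter_upwards with x
          rfl
        · filter_upwards with x
          apply Tendsto.const_mul
          apply (Complex.continuous_exp.tendsto _).comp
          apply Tendsto.neg
          exact hc1tend.mul_const _
      have hcoef : Tendsto (fun ε : ℝ => B / (2 * c1 ε)) (nhdsWithin 0 (Set.Ioi 0))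
          (nhds (B / (2 * c0))) := by
        apply Tendsto.div tendsto_const_nhds (tendsto_const_nhds.mul hc1tend)
        simp [hc0ne]
      apply (hcoef.mul hJt).congr'
      filter_upwards [self_mem_nhdsWithin] with ε hε
      rw [← main_identity' φ (hc1re ε hε)]
      apply MeasureTheory.integral_congr_ae
      filter_upwards with ρ
      congr 1
      rw [hc1sq ε]
      push_cast
      ring
    · -- bound on |L|
      rw [norm_mul, norm_div, norm_mul, Complex.norm_two, hBdef, Complex.norm_real, Real.norm_eq_abs,
        _root_.abs_of_nonneg (by positivity : (0:ℝ) ≤ (2*π) ^ ((1:ℝ)/2)), hc0abs]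
      have hJb : ‖J c0‖ ≤ M := J_bound φ (by rw [hc0re])
      calc (2*π) ^ ((1:ℝ)/2) / (2 * Real.sqrt (2*k)) * ‖J c0‖
          ≤ (2*π) ^ ((1:ℝ)/2) / (2 * Real.sqrt (2*k)) * M := by
            apply mul_le_mul_of_nonneg_left hJb (by positivity)
        _ ≤ Real.sqrt π * k ^ (-(1:ℝ)/2) * M := mul_le_mul_of_nonneg_right hnum hM
  · -- the resolvent part
    set c2 : ℂ := ((Real.sqrt (2*k) : ℝ) : ℂ) with hc2def
    have hc2re : 0 < c2.re := by rw [hc2def]; simpa using hsq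
    have hc2abs : ‖c2‖ = Real.sqrt (2*k) := by
      rw [hc2def, Complex.norm_real, Real.norm_eq_abs, _root_.abs_of_nonneg hsq.le]
    have hc2sq : c2 ^ 2 = ((2*k : ℝ) : ℂ) := by
      rw [hc2def, ← Complex.ofReal_pow, Real.sq_sqrt h2k.le]
    have heq : (∫ ρ : ℝ, φ ρ / (((ρ^2 + 2*k : ℝ) : ℂ)))
        = ∫ ρ : ℝ, φ ρ / ((ρ:ℂ) ^ 2 + c2 ^ 2) := by
      apply MeasureTheory.integral_congr_ae
      filter_upwards with ρ
      congr 1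
      rw [hc2sq]
      push_cast
      ring
    rw [heq]
    calc ‖∫ ρ : ℝ, φ ρ / ((ρ:ℂ) ^ 2 + c2 ^ 2)‖
        ≤ (2 * π) ^ ((1:ℝ)/2) / (2 * ‖c2‖) * M := abs_integral_bound φ hc2re
      _ ≤ Real.sqrt π * k ^ (-(1:ℝ)/2) * M := by
          rw [hc2abs]; exact mul_le_mul_of_nonneg_right hnum hM

end
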